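/- U is m-recurrent if and only if its weak dual resolvent U* is m-recurrent. -/

import Mathlib

open MeasureTheory ENNReal Filter Set

/-- A sub-Markovian resolvent of kernels on a measurable space `E`. -/
structure SubMarkovResolvent (E : Type*) [MeasurableSpace E] where
  /-- the kernel `U_α` for each `α > 0` -/
  kernel : ℝ → E → MeasureTheory.Measure E
  measurable_op : ∀ α : ℝ, 0 < α → ∀ f : E → ℝ≥0∞, Measurable f →
    Measurable (fun x => ∫⁻ y, f y ∂(kernel α x))
  resolvent_eq : ∀ α β : ℝ, 0 < α → α ≤ β → ∀ f : E → ℝ≥0∞, Measurable f → ∀ x,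
    ∫⁻ y, f y ∂(kernel α x)
      = (∫⁻ y, f y ∂(kernel β x))
        + ENNReal.ofReal (β - α) * ∫⁻ y, (∫⁻ z, f z ∂(kernel β y)) ∂(kernel α x)
  subMarkov : ∀ α : ℝ, 0 < α → ∀ x, ENNReal.ofReal α * kernel α x Set.univ ≤ 1

namespace SubMarkovResolvent

variable {E : Type*} [MeasurableSpace E]

/-- The action of `U_α` on positive measurable functions. -/
noncomputable def op (R : SubMarkovResolvent E) (α : ℝ) (f : E → ℝ≥0∞) (x : E) : ℝ≥0∞ :=
  ∫⁻ y, f y ∂(R.kernel α x)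

/-- The action of `U_α` on real-valued functions. -/
noncomputable def opR (R : SubMarkovResolvent E) (α : ℝ) (f : E → ℝ) (x : E) : ℝ :=
  ∫ y, f y ∂(R.kernel α x)

/-- The initial (potential) kernel `U = sup_{α > 0} U_α`. -/
noncomputable def pot (R : SubMarkovResolvent E) (f : E → ℝ≥0∞) (x : E) : ℝ≥0∞ :=
  ⨆ (α : ℝ) (_ : 0 < α), R.op α f x

/-- `m` is sub-invariant: `m ∘ (α U_α) ≤ m` for all `α > 0`. -/
def SubInvariant (R : SubMarkovResolvent E) (m : Measure E) : Prop :=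
  ∀ α : ℝ, 0 < α → ∀ f : E → ℝ≥0∞, Measurable f →
    ENNReal.ofReal α * ∫⁻ x, R.op α f x ∂m ≤ ∫⁻ x, f x ∂m

/-- `U` is `m`-transient. -/
def Transient (R : SubMarkovResolvent E) (m : Measure E) : Prop :=
  ∃ f : E → ℝ≥0∞, Measurable f ∧ (∫⁻ x, f x ∂m < ⊤) ∧
    (∀ᵐ x ∂m, 0 < f x) ∧ (∀ᵐ x ∂m, R.pot f x < ⊤)

/-- `U` is `m`-recurrent. -/
def Recurrent (R : SubMarkovResolvent E) (m : Measure E) : Prop :=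
  ∀ f : E → ℝ≥0∞, Measurable f → (∫⁻ x, f x ∂m < ⊤) →
    m {x | 0 < R.pot f x ∧ R.pot f x < ⊤} = 0

/-- `A` is `U`-absorbing with respect to `m`. -/
def Absorbing (R : SubMarkovResolvent E) (m : Measure E) (A : Set E) : Prop :=
  MeasurableSet A ∧ ∀ᵐ x ∂m, x ∈ A → R.pot (Set.indicator Aᶜ 1) x = 0

/-- `U` is `m`-irreducible. -/
def Irreducible (R : SubMarkovResolvent E) (m : Measure E) : Prop :=
  ∀ A : Set E, R.Absorbing m A → m A = 0 ∨ m Aᶜ = 0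

/-- `u` is `U`-excessive: supermedian and `α U_α u ↑ u` as `α → ∞`. -/
def Excessive (R : SubMarkovResolvent E) (u : E → ℝ≥0∞) : Prop :=
  Measurable u ∧ (∀ α : ℝ, 0 < α → ∀ x, ENNReal.ofReal α * R.op α u x ≤ u x) ∧
    (∀ x, (⨆ (α : ℝ) (_ : 0 < α), ENNReal.ofReal α * R.op α u x) = u x)

/-- The complete maximum principle for the initial kernel of `U`. -/
def CompleteMaxPrinciple (R : SubMarkovResolvent E) : Prop :=
  ∀ (f g : E → ℝ≥0∞) (c : ℝ≥0∞), Measurable f → Measurable g →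
    (∀ x, 0 < f x → R.pot f x ≤ R.pot g x + c) → ∀ x, R.pot f x ≤ R.pot g x + c

/-- `U` and `U*` are in weak duality with respect to `m`. -/
def InDuality (R S : SubMarkovResolvent E) (m : Measure E) : Prop :=
  ∀ α : ℝ, 0 < α → ∀ f g : E → ℝ≥0∞, Measurable f → Measurable g →
    ∫⁻ x, f x * R.op α g x ∂m = ∫⁻ x, g x * S.op α f x ∂m

/-- A real-valued function `v` is `U`-invariant with respect to `m`:
`U_α(v f) = v ⋅ U_α f` `m`-a.e. for all `α > 0` and bounded positive measurable `f`. -/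
def Invariant (R : SubMarkovResolvent E) (m : Measure E) (v : E → ℝ) : Prop :=
  ∀ α : ℝ, 0 < α → ∀ f : E → ℝ, Measurable f → (∀ x, 0 ≤ f x) → (∃ C : ℝ, ∀ x, f x ≤ C) →
    ∀ᵐ x ∂m, R.opR α (fun y => v y * f y) x = v x * R.opR α f x

end SubMarkovResolvent

namespace SubMarkovResolvent

variable {E : Type*} [MeasurableSpace E]

lemma op_antitone (R : SubMarkovResolvent E) {α β : ℝ} (hα : 0 < α) (hαβ : α ≤ β)
    {f : E → ℝ≥0∞} (hf : Measurable f) (x : E) : R.op β f x ≤ R.op α f x := by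
  have h := R.resolvent_eq α β hα hαβ f hf x
  show (∫⁻ y, f y ∂(R.kernel β x)) ≤ ∫⁻ y, f y ∂(R.kernel α x)
  rw [h]; exact le_self_add

lemma pot_eq_iSup (R : SubMarkovResolvent E) {f : E → ℝ≥0∞} (hf : Measurable f) (x : E) :
    R.pot f x = ⨆ n : ℕ, R.op (1 / (n + 1)) f x := by
  apply le_antisymm
  · apply iSup₂_le; intro α hα
    obtain ⟨n, hn⟩ := exists_nat_one_div_lt hα
    exact le_trans (R.op_antitone (by positivity) hn.le hf x)
      (le_iSup (fun n : ℕ => R.op (1 / (n + 1)) f x) n)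
  · apply iSup_le; intro n
    exact le_iSup₂ (f := fun (α : ℝ) (_ : 0 < α) => R.op α f x) (1 / (n + 1) : ℝ) (by positivity)

lemma pot_measurable (R : SubMarkovResolvent E) {f : E → ℝ≥0∞} (hf : Measurable f) :
    Measurable (R.pot f) := by
  have h : R.pot f = fun x => ⨆ n : ℕ, R.op (1 / (n + 1)) f x :=
    funext fun x => R.pot_eq_iSup hf x
  rw [h]
  exact Measurable.iSup fun n => R.measurable_op _ (by positivity) f hf

lemma pot_duality (R S : SubMarkovResolvent E) (m : Measure E) (hD : R.InDuality S m)
    {f g : E → ℝ≥0∞} (hf : Measurable f) (hg : Measurable g) :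
    ∫⁻ x, f x * S.pot g x ∂m = ∫⁻ x, g x * R.pot f x ∂m := by
  have hpos : ∀ n : ℕ, (0 : ℝ) < 1 / (n + 1) := fun n => by positivity
  have hanti : ∀ n k : ℕ, n ≤ k → (1 / (k + 1) : ℝ) ≤ 1 / (n + 1) := by
    intro n k hnk
    apply one_div_le_one_div_of_le (by positivity)
    have : (n : ℝ) ≤ k := Nat.cast_le.mpr hnk
    linarith
  calc ∫⁻ x, f x * S.pot g x ∂m
      = ∫⁻ x, ⨆ n : ℕ, f x * S.op (1 / (n + 1)) g x ∂m := by
        apply lintegral_congr; intro x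
        rw [S.pot_eq_iSup hg, ENNReal.mul_iSup]
    _ = ⨆ n : ℕ, ∫⁻ x, f x * S.op (1 / (n + 1)) g x ∂m := by
        apply lintegral_iSup
        · intro n; exact hf.mul (S.measurable_op _ (hpos n) g hg)
        · intro n k hnk x
          exact mul_le_mul_right (S.op_antitone (hpos k) (hanti n k hnk) hg x) _
    _ = ⨆ n : ℕ, ∫⁻ x, g x * R.op (1 / (n + 1)) f x ∂m := by
        apply iSup_congr; intro n
        exact (hD _ (hpos n) g f hg hf).symm
    _ = ∫⁻ x, ⨆ n : ℕ, g x * R.op (1 / (n + 1)) f x ∂m := by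
        symm
        apply lintegral_iSup
        · intro n; exact hg.mul (R.measurable_op _ (hpos n) f hf)
        · intro n k hnk x
          exact mul_le_mul_right (R.op_antitone (hpos k) (hanti n k hnk) hf x) _
    _ = ∫⁻ x, g x * R.pot f x ∂m := by
        apply lintegral_congr; intro x
        rw [R.pot_eq_iSup hf, ENNReal.mul_iSup]

lemma recurrent_of_dual (R S : SubMarkovResolvent E) (m : Measure E) [SigmaFinite m]
    (hdual : ∀ f g : E → ℝ≥0∞, Measurable f → Measurable g →
      ∫⁻ x, f x * S.pot g x ∂m = ∫⁻ x, g x * R.pot f x ∂m)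
    (hR : R.Recurrent m) : S.Recurrent m := by
  intro g hg hgint
  set φ := S.pot g with hφdef
  have hφmeas : Measurable φ := S.pot_measurable hg
  set A : Set E := {x | 0 < φ x ∧ φ x < ⊤} with hAdef
  -- It suffices to kill each bounded, finite-measure piece of A
  have key : ∀ n k : ℕ, m (A ∩ {x | φ x ≤ n} ∩ spanningSets m k) = 0 := by
    intro n k
    set B : Set E := A ∩ {x | φ x ≤ n} ∩ spanningSets m k with hBdef
    have hB : MeasurableSet B := by
      apply MeasurableSet.inter
      · apply MeasurableSet.inter
        · exact (hφmeas measurableSet_Ioi).inter (hφmeas measurableSet_Iio)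
        · exact hφmeas measurableSet_Iic
      · exact measurableSet_spanningSets m k
    by_contra hpos
    have hmBpos : 0 < m B := pos_iff_ne_zero.mpr hpos
    set f : E → ℝ≥0∞ := B.indicator 1 with hfdef
    have hfmeas : Measurable f := measurable_one.indicator hB
    have hmBlt : m B < ⊤ :=
      lt_of_le_of_lt (measure_mono fun x hx => hx.2) (measure_spanningSets_lt_top m k)
    have hfint : ∫⁻ x, f x ∂m < ⊤ := by
      rw [hfdef, lintegral_indicator_one hB]; exact hmBlt
    set ψ := R.pot f with hψdef
    have hψmeas : Measurable ψ := R.pot_measurable hfmeas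
    set I := ∫⁻ x, f x * φ x ∂m with hIdef
    -- I is finite
    have hIle : I ≤ n * m B := by
      have hle : ∀ x, f x * φ x ≤ B.indicator (fun _ => (n : ℝ≥0∞)) x := by
        intro x
        by_cases hx : x ∈ B
        · rw [hfdef, indicator_of_mem hx, indicator_of_mem hx]
          simpa using hx.1.2
        · rw [hfdef, indicator_of_notMem hx, indicator_of_notMem hx, zero_mul]
      calc I ≤ ∫⁻ x, B.indicator (fun _ => (n : ℝ≥0∞)) x ∂m := lintegral_mono hle
        _ = n * m B := by rw [lintegral_indicator_const hB]
    have hIlt : I < ⊤ :=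
      lt_of_le_of_lt hIle (ENNReal.mul_lt_top (by simp) hmBlt)
    -- I is positive
    have hIpos : 0 < I := by
      rw [hIdef]; change 0 < ∫⁻ x, (f * φ) x ∂m; rw [lintegral_pos_iff_support (hfmeas.mul hφmeas)]
      refine lt_of_lt_of_le hmBpos (measure_mono ?_)
      intro x hx
      have h1 : f x = 1 := by rw [hfdef, indicator_of_mem hx]; rfl
      have h2 : 0 < φ x := hx.1.1.1
      simp only [Function.mem_support, Pi.mul_apply, h1, one_mul]
      exact h2.ne'
    -- By duality, I = ∫ g ψ
    have hIeq : I = ∫⁻ x, g x * ψ x ∂m := hdual f g hfmeas hg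
    -- ψ is a.e. 0 or ∞
    have hae1 : ∀ᵐ x ∂m, ¬(0 < ψ x ∧ ψ x < ⊤) := by
      rw [ae_iff]
      simp only [not_not]
      exact hR f hfmeas hfint
    have hae2 : ∀ᵐ x ∂m, g x * ψ x < ⊤ := by
      apply ae_lt_top (hg.mul hψmeas)
      change ∫⁻ x, g x * ψ x ∂m ≠ ⊤; rw [← hIeq]; exact hIlt.ne
    have haez : ∀ᵐ x ∂m, g x * ψ x = 0 := by
      filter_upwards [hae1, hae2] with x h1 h2
      by_cases hψ0 : ψ x = 0
      · rw [hψ0, mul_zero]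
      · have hψtop : ψ x = ⊤ := by
          by_contra htop
          exact h1 ⟨pos_iff_ne_zero.mpr hψ0, lt_top_iff_ne_top.mpr htop⟩
        by_cases hg0 : g x = 0
        · rw [hg0, zero_mul]
        · exfalso
          rw [hψtop, ENNReal.mul_top hg0] at h2
          exact (lt_irrefl _ h2).elim
    have : I = 0 := by
      rw [hIeq, lintegral_congr_ae haez, lintegral_zero]
    exact hIpos.ne' this
  have hcover : A ⊆ ⋃ (n : ℕ) (k : ℕ), A ∩ {x | φ x ≤ n} ∩ spanningSets m k := by
    intro x hx
    obtain ⟨n, hn⟩ := ENNReal.exists_nat_gt hx.2.ne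
    obtain ⟨k, hk⟩ := mem_iUnion.mp (by rw [iUnion_spanningSets]; exact mem_univ x :
      x ∈ ⋃ k, spanningSets m k)
    exact mem_iUnion.mpr ⟨n, mem_iUnion.mpr ⟨k, ⟨⟨hx, hn.le⟩, hk⟩⟩⟩
  exact measure_mono_null hcover
    (measure_iUnion_null fun n => measure_iUnion_null fun k => key n k)

end SubMarkovResolvent

/-- `U` is `m`-recurrent iff its weak dual `U*` is `m`-recurrent. -/
theorem recurrent_iff_dual_recurrent {E : Type*} [MeasurableSpace E]
    (R S : SubMarkovResolvent E) (m : MeasureTheory.Measure E) [MeasureTheory.SigmaFinite m]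
    (hm : R.SubInvariant m) (hD : R.InDuality S m) :
    R.Recurrent m ↔ S.Recurrent m := by
  have hD' : S.InDuality R m := fun α hα f g hf hg => (hD α hα g f hg hf).symm
  constructor
  · exact fun hR => SubMarkovResolvent.recurrent_of_dual R S m
      (fun f g hf hg => SubMarkovResolvent.pot_duality R S m hD hf hg) hR
  · exact fun hS => SubMarkovResolvent.recurrent_of_dual S R m
      (fun f g hf hg => SubMarkovResolvent.pot_duality S R m hD' hf hg) hS
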